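/- Let s ≥ 1 and r ≥ 1 be integers, let n₁, …, n_s be positive integers, let L₁ < 0 be a real number, and set n := n₁ + ⋯ + n_s + s + r − 1. Let H be an invertible s×s real matrix with H α β = L₁ for all α ≠ β, and suppose the row sums of its inverse satisfy Σ_β (H⁻¹) α β = −(n_α + 1)/(r·L₁) for every α. Then the diagonal entries of H are H γ γ = ((n − n_γ)/(n_γ + 1))·(−L₁) for every γ. -/

import Mathlib

/-- If `H` is an invertible real `s × s` matrix with all off-diagonal entries
equal to `L₁ < 0`, and the row sums of its inverse are `-(n_α + 1)/(r·L₁)`,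
then the diagonal entries of `H` are `((n - n_γ)/(n_γ + 1))·(-L₁)`. -/
theorem gram_diag_of_inv_row_sums
    (s r : ℕ) (hs : 1 ≤ s) (hr : 1 ≤ r)
    (nn : Fin s → ℕ) (hnn : ∀ α, 0 < nn α)
    (L₁ : ℝ) (hL : L₁ < 0)
    (n : ℕ) (hn : n = (∑ α, nn α) + s + r - 1)
    (H : Matrix (Fin s) (Fin s) ℝ) (hdet : IsUnit H.det)
    (hHoff : ∀ α β, α ≠ β → H α β = L₁)
    (hrow : ∀ α, ∑ β, H⁻¹ α β = -((nn α : ℝ) + 1) / ((r : ℝ) * L₁)) :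
    ∀ γ, H γ γ = (((n : ℝ) - (nn γ : ℝ)) / ((nn γ : ℝ) + 1)) * (-L₁) := by
  intro γ
  have hL0 : L₁ ≠ 0 := ne_of_lt hL
  have hr0 : (r : ℝ) ≠ 0 := by positivity
  have hinv := Matrix.mul_nonsing_inv H hdet
  have key : ∑ β, ∑ δ, H γ β * H⁻¹ β δ = 1 := by
    have h1 := congrArg (fun M => ∑ δ, M γ δ) hinv
    simp only [Matrix.mul_apply, Matrix.one_apply] at h1
    rw [Finset.sum_comm]
    simpa using h1
  simp only [← Finset.mul_sum, hrow] at key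
  set c : Fin s → ℝ := fun β => -((nn β : ℝ) + 1) / ((r : ℝ) * L₁) with hc
  rw [← Finset.sum_erase_add _ _ (Finset.mem_univ γ)] at key
  have hoffsum : ∑ β ∈ Finset.univ.erase γ, H γ β * c β
      = L₁ * (∑ β, c β - c γ) := by
    rw [show ∑ β ∈ Finset.univ.erase γ, H γ β * c β
        = ∑ β ∈ Finset.univ.erase γ, L₁ * c β from
      Finset.sum_congr rfl (fun β hβ => by
        rw [hHoff γ β (Ne.symm (Finset.ne_of_mem_erase hβ))]),
      ← Finset.mul_sum, Finset.sum_erase_eq_sub (Finset.mem_univ γ)]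
  rw [hoffsum] at key
  have hcsum : ∑ β, c β = -((∑ α, (nn α : ℝ)) + s) / ((r : ℝ) * L₁) := by
    rw [← Finset.sum_div]
    congr 1
    simp only [neg_add, Finset.sum_add_distrib, Finset.sum_neg_distrib,
      Finset.sum_const, Finset.card_univ, Fintype.card_fin, nsmul_eq_mul, mul_one]
  have hnR : (n : ℝ) + 1 = (∑ α, (nn α : ℝ)) + s + r := by
    have h1 : 1 ≤ (∑ α, nn α) + s + r := by omega
    have : (n : ℝ) = (((∑ α, nn α) + s + r : ℕ) : ℝ) - 1 := by
      rw [hn, Nat.cast_sub h1]; push_cast; ring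
    rw [this]; push_cast; ring
  have hcγ : c γ ≠ 0 := by
    simp only [hc]
    apply div_ne_zero
    · have : (0:ℝ) < (nn γ : ℝ) + 1 := by positivity
      intro h; rw [neg_eq_zero] at h; linarith
    · exact mul_ne_zero hr0 hL0
  have hHγ : H γ γ = (1 - L₁ * (∑ β, c β - c γ)) / c γ := by
    rw [eq_div_iff hcγ]; linarith [key]
  rw [hHγ, hcsum]
  simp only [hc]
  have h1γ : (nn γ : ℝ) + 1 ≠ 0 := by positivity
  field_simp

  have hne : (-1 + -(nn γ : ℝ)) ≠ 0 := by
    have h0 : (0:ℝ) ≤ (nn γ : ℝ) := Nat.cast_nonneg _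
    intro h; linarith
  linear_combination hnR
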